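/- If a randomized 3-selection mechanism with predictions is impartial, α-consistent, and β-robust, then β ≤ 4/5, 4α + 3β ≤ 6, and 4α + 21β ≤ 20. -/
import Mathlib


/-- `E` has no self-loops. -/
def NoLoops {n : ℕ} (E : Finset (Fin n × Fin n)) : Prop := ∀ i, (i, i) ∉ E

/-- The indegree of vertex `i` in the graph with edge set `E`. -/
def indeg {n : ℕ} (E : Finset (Fin n × Fin n)) (i : Fin n) : ℕ :=
  (E.filter (fun e => e.2 = i)).card

/-- The total indegree of a set `S` of vertices. -/
def indegS {n : ℕ} (E : Finset (Fin n × Fin n)) (S : Finset (Fin n)) : ℕ :=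
  ∑ i ∈ S, indeg E i

/-- `Δ_k(G)`: the maximum total indegree of a set of `k` vertices. -/
def maxDeg {n : ℕ} (k : ℕ) (E : Finset (Fin n × Fin n)) : ℕ :=
  (Finset.powersetCard k Finset.univ).sup (indegS E)

/-- A (randomized) selection mechanism with predictions: for each `n`,
given a predicted set and a graph, it assigns a selection probability to each vertex. -/
abbrev Mech : Type :=
  ∀ n : ℕ, Finset (Fin n) → Finset (Fin n × Fin n) → Fin n → ℝ

/-- The probabilities lie in `[0,1]` and sum to at most `k` on every valid input. -/
def ValidMech (k : ℕ) (f : Mech) : Prop :=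
  ∀ (n : ℕ) (Sh : Finset (Fin n)) (E : Finset (Fin n × Fin n)),
    Sh.card = k → NoLoops E →
      (∀ i, 0 ≤ f n Sh E i ∧ f n Sh E i ≤ 1) ∧ (∑ i, f n Sh E i) ≤ (k : ℝ)

/-- Impartiality: the probability of selecting `i` does not depend on `i`'s outgoing edges. -/
def Impartial (k : ℕ) (f : Mech) : Prop :=
  ∀ (n : ℕ) (Sh : Finset (Fin n)) (E E' : Finset (Fin n × Fin n)) (i : Fin n),
    Sh.card = k → NoLoops E → NoLoops E' →
    E.filter (fun e => e.1 ≠ i) = E'.filter (fun e => e.1 ≠ i) →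
    f n Sh E i = f n Sh E' i

/-- `α`-consistency: an `α`-approximation whenever the prediction is accurate. -/
def Consistent (k : ℕ) (α : ℝ) (f : Mech) : Prop :=
  ∀ (n : ℕ) (Sh : Finset (Fin n)) (E : Finset (Fin n × Fin n)),
    Sh.card = k → NoLoops E → indegS E Sh = maxDeg k E →
    α * (maxDeg k E : ℝ) ≤ ∑ i, f n Sh E i * (indeg E i : ℝ)

/-- `β`-robustness: a `β`-approximation regardless of the prediction. -/
def Robust (k : ℕ) (β : ℝ) (f : Mech) : Prop :=
  ∀ (n : ℕ) (Sh : Finset (Fin n)) (E : Finset (Fin n × Fin n)),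
    Sh.card = k → NoLoops E →
    β * (maxDeg k E : ℝ) ≤ ∑ i, f n Sh E i * (indeg E i : ℝ)


set_option maxHeartbeats 2000000 in
/-- If a randomized 3-selection mechanism with predictions is impartial, `α`-consistent, and
`β`-robust, then `β ≤ 4/5`, `4α + 3β ≤ 6`, and `4α + 21β ≤ 20`. -/
theorem upper_bound_three_selection (α β : ℝ) (hα₀ : 0 ≤ α) (hα₁ : α ≤ 1)
    (hβ₀ : 0 ≤ β) (hβ₁ : β ≤ 1) (f : Mech)
    (hvalid : ValidMech 3 f) (himp : Impartial 3 f)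
    (hcons : Consistent 3 α f) (hrob : Robust 3 β f) :
    β ≤ 4 / 5 ∧ 4 * α + 3 * β ≤ 6 ∧ 4 * α + 21 * β ≤ 20 := by
  set A0v : Finset (Fin 5 × Fin 5) := {(0,1),(0,2),(0,3),(0,4)} with hA0def
  set A1v : Finset (Fin 5 × Fin 5) := {(1,0),(1,2),(1,3),(1,4)} with hA1def
  set A2v : Finset (Fin 5 × Fin 5) := {(2,0),(2,1),(2,3),(2,4)} with hA2def
  set A3v : Finset (Fin 5 × Fin 5) := {(3,0),(3,1),(3,2),(3,4)} with hA3def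
  set A4v : Finset (Fin 5 × Fin 5) := {(4,0),(4,1),(4,2),(4,3)} with hA4def
  set B3v : Finset (Fin 5 × Fin 5) := {(3,0),(3,1),(3,2)} with hB3def
  set B4v : Finset (Fin 5 × Fin 5) := {(4,0),(4,1),(4,2)} with hB4def
  set P01v : Finset (Fin 5 × Fin 5) := {(0,1),(0,2),(0,3),(0,4),(1,0),(1,2),(1,3),(1,4)} with hP01def
  set P02v : Finset (Fin 5 × Fin 5) := {(0,1),(0,2),(0,3),(0,4),(2,0),(2,1),(2,3),(2,4)} with hP02def
  set P03v : Finset (Fin 5 × Fin 5) := {(0,1),(0,2),(0,3),(0,4),(3,0),(3,1),(3,2),(3,4)} with hP03def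
  set P04v : Finset (Fin 5 × Fin 5) := {(0,1),(0,2),(0,3),(0,4),(4,0),(4,1),(4,2),(4,3)} with hP04def
  set P12v : Finset (Fin 5 × Fin 5) := {(1,0),(1,2),(1,3),(1,4),(2,0),(2,1),(2,3),(2,4)} with hP12def
  set P13v : Finset (Fin 5 × Fin 5) := {(1,0),(1,2),(1,3),(1,4),(3,0),(3,1),(3,2),(3,4)} with hP13def
  set P14v : Finset (Fin 5 × Fin 5) := {(1,0),(1,2),(1,3),(1,4),(4,0),(4,1),(4,2),(4,3)} with hP14def
  set P23v : Finset (Fin 5 × Fin 5) := {(2,0),(2,1),(2,3),(2,4),(3,0),(3,1),(3,2),(3,4)} with hP23def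
  set P24v : Finset (Fin 5 × Fin 5) := {(2,0),(2,1),(2,3),(2,4),(4,0),(4,1),(4,2),(4,3)} with hP24def
  set P34v : Finset (Fin 5 × Fin 5) := {(3,0),(3,1),(3,2),(3,4),(4,0),(4,1),(4,2),(4,3)} with hP34def
  set M03v : Finset (Fin 5 × Fin 5) := {(0,1),(0,2),(0,3),(0,4),(3,0),(3,1),(3,2)} with hM03def
  set M04v : Finset (Fin 5 × Fin 5) := {(0,1),(0,2),(0,3),(0,4),(4,0),(4,1),(4,2)} with hM04def
  set M13v : Finset (Fin 5 × Fin 5) := {(1,0),(1,2),(1,3),(1,4),(3,0),(3,1),(3,2)} with hM13def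
  set M14v : Finset (Fin 5 × Fin 5) := {(1,0),(1,2),(1,3),(1,4),(4,0),(4,1),(4,2)} with hM14def
  set M23v : Finset (Fin 5 × Fin 5) := {(2,0),(2,1),(2,3),(2,4),(3,0),(3,1),(3,2)} with hM23def
  set M24v : Finset (Fin 5 × Fin 5) := {(2,0),(2,1),(2,3),(2,4),(4,0),(4,1),(4,2)} with hM24def
  have nlA0 : NoLoops A0v := by rw [hA0def]; unfold NoLoops; decide
  have nlA1 : NoLoops A1v := by rw [hA1def]; unfold NoLoops; decide
  have nlA2 : NoLoops A2v := by rw [hA2def]; unfold NoLoops; decide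
  have nlA3 : NoLoops A3v := by rw [hA3def]; unfold NoLoops; decide
  have nlA4 : NoLoops A4v := by rw [hA4def]; unfold NoLoops; decide
  have nlB3 : NoLoops B3v := by rw [hB3def]; unfold NoLoops; decide
  have nlB4 : NoLoops B4v := by rw [hB4def]; unfold NoLoops; decide
  have nlP01 : NoLoops P01v := by rw [hP01def]; unfold NoLoops; decide
  have nlP02 : NoLoops P02v := by rw [hP02def]; unfold NoLoops; decide
  have nlP03 : NoLoops P03v := by rw [hP03def]; unfold NoLoops; decide
  have nlP04 : NoLoops P04v := by rw [hP04def]; unfold NoLoops; decide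
  have nlP12 : NoLoops P12v := by rw [hP12def]; unfold NoLoops; decide
  have nlP13 : NoLoops P13v := by rw [hP13def]; unfold NoLoops; decide
  have nlP14 : NoLoops P14v := by rw [hP14def]; unfold NoLoops; decide
  have nlP23 : NoLoops P23v := by rw [hP23def]; unfold NoLoops; decide
  have nlP24 : NoLoops P24v := by rw [hP24def]; unfold NoLoops; decide
  have nlP34 : NoLoops P34v := by rw [hP34def]; unfold NoLoops; decide
  have nlM03 : NoLoops M03v := by rw [hM03def]; unfold NoLoops; decide
  have nlM04 : NoLoops M04v := by rw [hM04def]; unfold NoLoops; decide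
  have nlM13 : NoLoops M13v := by rw [hM13def]; unfold NoLoops; decide
  have nlM14 : NoLoops M14v := by rw [hM14def]; unfold NoLoops; decide
  have nlM23 : NoLoops M23v := by rw [hM23def]; unfold NoLoops; decide
  have nlM24 : NoLoops M24v := by rw [hM24def]; unfold NoLoops; decide
  have robA0 : β * 3 ≤ f 5 ({0,1,2} : Finset (Fin 5)) A0v 1 * 1 + f 5 ({0,1,2} : Finset (Fin 5)) A0v 2 * 1 + f 5 ({0,1,2} : Finset (Fin 5)) A0v 3 * 1 + f 5 ({0,1,2} : Finset (Fin 5)) A0v 4 * 1 := by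
    have hr := hrob 5 ({0,1,2} : Finset (Fin 5)) A0v (by rfl) nlA0
    rw [(by rw [hA0def]; decide : maxDeg 3 A0v = 3), Fin.sum_univ_five, (by rw [hA0def]; decide : indeg A0v 0 = 0), (by rw [hA0def]; decide : indeg A0v 1 = 1), (by rw [hA0def]; decide : indeg A0v 2 = 1), (by rw [hA0def]; decide : indeg A0v 3 = 1), (by rw [hA0def]; decide : indeg A0v 4 = 1)] at hr
    push_cast at hr; linarith
  have robA1 : β * 3 ≤ f 5 ({0,1,2} : Finset (Fin 5)) A1v 0 * 1 + f 5 ({0,1,2} : Finset (Fin 5)) A1v 2 * 1 + f 5 ({0,1,2} : Finset (Fin 5)) A1v 3 * 1 + f 5 ({0,1,2} : Finset (Fin 5)) A1v 4 * 1 := by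
    have hr := hrob 5 ({0,1,2} : Finset (Fin 5)) A1v (by rfl) nlA1
    rw [(by rw [hA1def]; decide : maxDeg 3 A1v = 3), Fin.sum_univ_five, (by rw [hA1def]; decide : indeg A1v 0 = 1), (by rw [hA1def]; decide : indeg A1v 1 = 0), (by rw [hA1def]; decide : indeg A1v 2 = 1), (by rw [hA1def]; decide : indeg A1v 3 = 1), (by rw [hA1def]; decide : indeg A1v 4 = 1)] at hr
    push_cast at hr; linarith
  have robA2 : β * 3 ≤ f 5 ({0,1,2} : Finset (Fin 5)) A2v 0 * 1 + f 5 ({0,1,2} : Finset (Fin 5)) A2v 1 * 1 + f 5 ({0,1,2} : Finset (Fin 5)) A2v 3 * 1 + f 5 ({0,1,2} : Finset (Fin 5)) A2v 4 * 1 := by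
    have hr := hrob 5 ({0,1,2} : Finset (Fin 5)) A2v (by rfl) nlA2
    rw [(by rw [hA2def]; decide : maxDeg 3 A2v = 3), Fin.sum_univ_five, (by rw [hA2def]; decide : indeg A2v 0 = 1), (by rw [hA2def]; decide : indeg A2v 1 = 1), (by rw [hA2def]; decide : indeg A2v 2 = 0), (by rw [hA2def]; decide : indeg A2v 3 = 1), (by rw [hA2def]; decide : indeg A2v 4 = 1)] at hr
    push_cast at hr; linarith
  have robA3 : β * 3 ≤ f 5 ({0,1,2} : Finset (Fin 5)) A3v 0 * 1 + f 5 ({0,1,2} : Finset (Fin 5)) A3v 1 * 1 + f 5 ({0,1,2} : Finset (Fin 5)) A3v 2 * 1 + f 5 ({0,1,2} : Finset (Fin 5)) A3v 4 * 1 := by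
    have hr := hrob 5 ({0,1,2} : Finset (Fin 5)) A3v (by rfl) nlA3
    rw [(by rw [hA3def]; decide : maxDeg 3 A3v = 3), Fin.sum_univ_five, (by rw [hA3def]; decide : indeg A3v 0 = 1), (by rw [hA3def]; decide : indeg A3v 1 = 1), (by rw [hA3def]; decide : indeg A3v 2 = 1), (by rw [hA3def]; decide : indeg A3v 3 = 0), (by rw [hA3def]; decide : indeg A3v 4 = 1)] at hr
    push_cast at hr; linarith
  have robA4 : β * 3 ≤ f 5 ({0,1,2} : Finset (Fin 5)) A4v 0 * 1 + f 5 ({0,1,2} : Finset (Fin 5)) A4v 1 * 1 + f 5 ({0,1,2} : Finset (Fin 5)) A4v 2 * 1 + f 5 ({0,1,2} : Finset (Fin 5)) A4v 3 * 1 := by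
    have hr := hrob 5 ({0,1,2} : Finset (Fin 5)) A4v (by rfl) nlA4
    rw [(by rw [hA4def]; decide : maxDeg 3 A4v = 3), Fin.sum_univ_five, (by rw [hA4def]; decide : indeg A4v 0 = 1), (by rw [hA4def]; decide : indeg A4v 1 = 1), (by rw [hA4def]; decide : indeg A4v 2 = 1), (by rw [hA4def]; decide : indeg A4v 3 = 1), (by rw [hA4def]; decide : indeg A4v 4 = 0)] at hr
    push_cast at hr; linarith
  have consA3 : α * 3 ≤ f 5 ({0,1,2} : Finset (Fin 5)) A3v 0 * 1 + f 5 ({0,1,2} : Finset (Fin 5)) A3v 1 * 1 + f 5 ({0,1,2} : Finset (Fin 5)) A3v 2 * 1 + f 5 ({0,1,2} : Finset (Fin 5)) A3v 4 * 1 := by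
    have hr := hcons 5 ({0,1,2} : Finset (Fin 5)) A3v (by rfl) nlA3 (by rw [hA3def]; decide)
    rw [(by rw [hA3def]; decide : maxDeg 3 A3v = 3), Fin.sum_univ_five, (by rw [hA3def]; decide : indeg A3v 0 = 1), (by rw [hA3def]; decide : indeg A3v 1 = 1), (by rw [hA3def]; decide : indeg A3v 2 = 1), (by rw [hA3def]; decide : indeg A3v 3 = 0), (by rw [hA3def]; decide : indeg A3v 4 = 1)] at hr
    push_cast at hr; linarith
  have consA4 : α * 3 ≤ f 5 ({0,1,2} : Finset (Fin 5)) A4v 0 * 1 + f 5 ({0,1,2} : Finset (Fin 5)) A4v 1 * 1 + f 5 ({0,1,2} : Finset (Fin 5)) A4v 2 * 1 + f 5 ({0,1,2} : Finset (Fin 5)) A4v 3 * 1 := by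
    have hr := hcons 5 ({0,1,2} : Finset (Fin 5)) A4v (by rfl) nlA4 (by rw [hA4def]; decide)
    rw [(by rw [hA4def]; decide : maxDeg 3 A4v = 3), Fin.sum_univ_five, (by rw [hA4def]; decide : indeg A4v 0 = 1), (by rw [hA4def]; decide : indeg A4v 1 = 1), (by rw [hA4def]; decide : indeg A4v 2 = 1), (by rw [hA4def]; decide : indeg A4v 3 = 1), (by rw [hA4def]; decide : indeg A4v 4 = 0)] at hr
    push_cast at hr; linarith
  have consB3 : α * 3 ≤ f 5 ({0,1,2} : Finset (Fin 5)) B3v 0 * 1 + f 5 ({0,1,2} : Finset (Fin 5)) B3v 1 * 1 + f 5 ({0,1,2} : Finset (Fin 5)) B3v 2 * 1 := by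
    have hr := hcons 5 ({0,1,2} : Finset (Fin 5)) B3v (by rfl) nlB3 (by rw [hB3def]; decide)
    rw [(by rw [hB3def]; decide : maxDeg 3 B3v = 3), Fin.sum_univ_five, (by rw [hB3def]; decide : indeg B3v 0 = 1), (by rw [hB3def]; decide : indeg B3v 1 = 1), (by rw [hB3def]; decide : indeg B3v 2 = 1), (by rw [hB3def]; decide : indeg B3v 3 = 0), (by rw [hB3def]; decide : indeg B3v 4 = 0)] at hr
    push_cast at hr; linarith
  have consB4 : α * 3 ≤ f 5 ({0,1,2} : Finset (Fin 5)) B4v 0 * 1 + f 5 ({0,1,2} : Finset (Fin 5)) B4v 1 * 1 + f 5 ({0,1,2} : Finset (Fin 5)) B4v 2 * 1 := by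
    have hr := hcons 5 ({0,1,2} : Finset (Fin 5)) B4v (by rfl) nlB4 (by rw [hB4def]; decide)
    rw [(by rw [hB4def]; decide : maxDeg 3 B4v = 3), Fin.sum_univ_five, (by rw [hB4def]; decide : indeg B4v 0 = 1), (by rw [hB4def]; decide : indeg B4v 1 = 1), (by rw [hB4def]; decide : indeg B4v 2 = 1), (by rw [hB4def]; decide : indeg B4v 3 = 0), (by rw [hB4def]; decide : indeg B4v 4 = 0)] at hr
    push_cast at hr; linarith
  have sumP01 : f 5 ({0,1,2} : Finset (Fin 5)) P01v 0 + f 5 ({0,1,2} : Finset (Fin 5)) P01v 1 + f 5 ({0,1,2} : Finset (Fin 5)) P01v 2 + f 5 ({0,1,2} : Finset (Fin 5)) P01v 3 + f 5 ({0,1,2} : Finset (Fin 5)) P01v 4 ≤ 3 := by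
    have hs := (hvalid 5 ({0,1,2} : Finset (Fin 5)) P01v (by rfl) nlP01).2
    rw [Fin.sum_univ_five] at hs; push_cast at hs; linarith
  have robP01 : β * 6 ≤ f 5 ({0,1,2} : Finset (Fin 5)) P01v 0 * 1 + f 5 ({0,1,2} : Finset (Fin 5)) P01v 1 * 1 + f 5 ({0,1,2} : Finset (Fin 5)) P01v 2 * 2 + f 5 ({0,1,2} : Finset (Fin 5)) P01v 3 * 2 + f 5 ({0,1,2} : Finset (Fin 5)) P01v 4 * 2 := by
    have hr := hrob 5 ({0,1,2} : Finset (Fin 5)) P01v (by rfl) nlP01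
    rw [(by rw [hP01def]; decide : maxDeg 3 P01v = 6), Fin.sum_univ_five, (by rw [hP01def]; decide : indeg P01v 0 = 1), (by rw [hP01def]; decide : indeg P01v 1 = 1), (by rw [hP01def]; decide : indeg P01v 2 = 2), (by rw [hP01def]; decide : indeg P01v 3 = 2), (by rw [hP01def]; decide : indeg P01v 4 = 2)] at hr
    push_cast at hr; linarith
  have impP01a : f 5 ({0,1,2} : Finset (Fin 5)) P01v 0 = f 5 ({0,1,2} : Finset (Fin 5)) A1v 0 :=
    himp 5 ({0,1,2} : Finset (Fin 5)) P01v A1v 0 (by rfl) nlP01 nlA1 (by rw [hP01def, hA1def]; decide)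
  have impP01b : f 5 ({0,1,2} : Finset (Fin 5)) P01v 1 = f 5 ({0,1,2} : Finset (Fin 5)) A0v 1 :=
    himp 5 ({0,1,2} : Finset (Fin 5)) P01v A0v 1 (by rfl) nlP01 nlA0 (by rw [hP01def, hA0def]; decide)
  have pr01 : f 5 ({0,1,2} : Finset (Fin 5)) A1v 0 + f 5 ({0,1,2} : Finset (Fin 5)) A0v 1 ≤ 6 - 6*β := by
    linarith [robP01, sumP01, impP01a, impP01b]
  have sumP02 : f 5 ({0,1,2} : Finset (Fin 5)) P02v 0 + f 5 ({0,1,2} : Finset (Fin 5)) P02v 1 + f 5 ({0,1,2} : Finset (Fin 5)) P02v 2 + f 5 ({0,1,2} : Finset (Fin 5)) P02v 3 + f 5 ({0,1,2} : Finset (Fin 5)) P02v 4 ≤ 3 := by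
    have hs := (hvalid 5 ({0,1,2} : Finset (Fin 5)) P02v (by rfl) nlP02).2
    rw [Fin.sum_univ_five] at hs; push_cast at hs; linarith
  have robP02 : β * 6 ≤ f 5 ({0,1,2} : Finset (Fin 5)) P02v 0 * 1 + f 5 ({0,1,2} : Finset (Fin 5)) P02v 1 * 2 + f 5 ({0,1,2} : Finset (Fin 5)) P02v 2 * 1 + f 5 ({0,1,2} : Finset (Fin 5)) P02v 3 * 2 + f 5 ({0,1,2} : Finset (Fin 5)) P02v 4 * 2 := by
    have hr := hrob 5 ({0,1,2} : Finset (Fin 5)) P02v (by rfl) nlP02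
    rw [(by rw [hP02def]; decide : maxDeg 3 P02v = 6), Fin.sum_univ_five, (by rw [hP02def]; decide : indeg P02v 0 = 1), (by rw [hP02def]; decide : indeg P02v 1 = 2), (by rw [hP02def]; decide : indeg P02v 2 = 1), (by rw [hP02def]; decide : indeg P02v 3 = 2), (by rw [hP02def]; decide : indeg P02v 4 = 2)] at hr
    push_cast at hr; linarith
  have impP02a : f 5 ({0,1,2} : Finset (Fin 5)) P02v 0 = f 5 ({0,1,2} : Finset (Fin 5)) A2v 0 :=
    himp 5 ({0,1,2} : Finset (Fin 5)) P02v A2v 0 (by rfl) nlP02 nlA2 (by rw [hP02def, hA2def]; decide)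
  have impP02b : f 5 ({0,1,2} : Finset (Fin 5)) P02v 2 = f 5 ({0,1,2} : Finset (Fin 5)) A0v 2 :=
    himp 5 ({0,1,2} : Finset (Fin 5)) P02v A0v 2 (by rfl) nlP02 nlA0 (by rw [hP02def, hA0def]; decide)
  have pr02 : f 5 ({0,1,2} : Finset (Fin 5)) A2v 0 + f 5 ({0,1,2} : Finset (Fin 5)) A0v 2 ≤ 6 - 6*β := by
    linarith [robP02, sumP02, impP02a, impP02b]
  have sumP03 : f 5 ({0,1,2} : Finset (Fin 5)) P03v 0 + f 5 ({0,1,2} : Finset (Fin 5)) P03v 1 + f 5 ({0,1,2} : Finset (Fin 5)) P03v 2 + f 5 ({0,1,2} : Finset (Fin 5)) P03v 3 + f 5 ({0,1,2} : Finset (Fin 5)) P03v 4 ≤ 3 := by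
    have hs := (hvalid 5 ({0,1,2} : Finset (Fin 5)) P03v (by rfl) nlP03).2
    rw [Fin.sum_univ_five] at hs; push_cast at hs; linarith
  have robP03 : β * 6 ≤ f 5 ({0,1,2} : Finset (Fin 5)) P03v 0 * 1 + f 5 ({0,1,2} : Finset (Fin 5)) P03v 1 * 2 + f 5 ({0,1,2} : Finset (Fin 5)) P03v 2 * 2 + f 5 ({0,1,2} : Finset (Fin 5)) P03v 3 * 1 + f 5 ({0,1,2} : Finset (Fin 5)) P03v 4 * 2 := by
    have hr := hrob 5 ({0,1,2} : Finset (Fin 5)) P03v (by rfl) nlP03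
    rw [(by rw [hP03def]; decide : maxDeg 3 P03v = 6), Fin.sum_univ_five, (by rw [hP03def]; decide : indeg P03v 0 = 1), (by rw [hP03def]; decide : indeg P03v 1 = 2), (by rw [hP03def]; decide : indeg P03v 2 = 2), (by rw [hP03def]; decide : indeg P03v 3 = 1), (by rw [hP03def]; decide : indeg P03v 4 = 2)] at hr
    push_cast at hr; linarith
  have impP03a : f 5 ({0,1,2} : Finset (Fin 5)) P03v 0 = f 5 ({0,1,2} : Finset (Fin 5)) A3v 0 :=
    himp 5 ({0,1,2} : Finset (Fin 5)) P03v A3v 0 (by rfl) nlP03 nlA3 (by rw [hP03def, hA3def]; decide)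
  have impP03b : f 5 ({0,1,2} : Finset (Fin 5)) P03v 3 = f 5 ({0,1,2} : Finset (Fin 5)) A0v 3 :=
    himp 5 ({0,1,2} : Finset (Fin 5)) P03v A0v 3 (by rfl) nlP03 nlA0 (by rw [hP03def, hA0def]; decide)
  have pr03 : f 5 ({0,1,2} : Finset (Fin 5)) A3v 0 + f 5 ({0,1,2} : Finset (Fin 5)) A0v 3 ≤ 6 - 6*β := by
    linarith [robP03, sumP03, impP03a, impP03b]
  have sumP04 : f 5 ({0,1,2} : Finset (Fin 5)) P04v 0 + f 5 ({0,1,2} : Finset (Fin 5)) P04v 1 + f 5 ({0,1,2} : Finset (Fin 5)) P04v 2 + f 5 ({0,1,2} : Finset (Fin 5)) P04v 3 + f 5 ({0,1,2} : Finset (Fin 5)) P04v 4 ≤ 3 := by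
    have hs := (hvalid 5 ({0,1,2} : Finset (Fin 5)) P04v (by rfl) nlP04).2
    rw [Fin.sum_univ_five] at hs; push_cast at hs; linarith
  have robP04 : β * 6 ≤ f 5 ({0,1,2} : Finset (Fin 5)) P04v 0 * 1 + f 5 ({0,1,2} : Finset (Fin 5)) P04v 1 * 2 + f 5 ({0,1,2} : Finset (Fin 5)) P04v 2 * 2 + f 5 ({0,1,2} : Finset (Fin 5)) P04v 3 * 2 + f 5 ({0,1,2} : Finset (Fin 5)) P04v 4 * 1 := by
    have hr := hrob 5 ({0,1,2} : Finset (Fin 5)) P04v (by rfl) nlP04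
    rw [(by rw [hP04def]; decide : maxDeg 3 P04v = 6), Fin.sum_univ_five, (by rw [hP04def]; decide : indeg P04v 0 = 1), (by rw [hP04def]; decide : indeg P04v 1 = 2), (by rw [hP04def]; decide : indeg P04v 2 = 2), (by rw [hP04def]; decide : indeg P04v 3 = 2), (by rw [hP04def]; decide : indeg P04v 4 = 1)] at hr
    push_cast at hr; linarith
  have impP04a : f 5 ({0,1,2} : Finset (Fin 5)) P04v 0 = f 5 ({0,1,2} : Finset (Fin 5)) A4v 0 :=
    himp 5 ({0,1,2} : Finset (Fin 5)) P04v A4v 0 (by rfl) nlP04 nlA4 (by rw [hP04def, hA4def]; decide)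
  have impP04b : f 5 ({0,1,2} : Finset (Fin 5)) P04v 4 = f 5 ({0,1,2} : Finset (Fin 5)) A0v 4 :=
    himp 5 ({0,1,2} : Finset (Fin 5)) P04v A0v 4 (by rfl) nlP04 nlA0 (by rw [hP04def, hA0def]; decide)
  have pr04 : f 5 ({0,1,2} : Finset (Fin 5)) A4v 0 + f 5 ({0,1,2} : Finset (Fin 5)) A0v 4 ≤ 6 - 6*β := by
    linarith [robP04, sumP04, impP04a, impP04b]
  have sumP12 : f 5 ({0,1,2} : Finset (Fin 5)) P12v 0 + f 5 ({0,1,2} : Finset (Fin 5)) P12v 1 + f 5 ({0,1,2} : Finset (Fin 5)) P12v 2 + f 5 ({0,1,2} : Finset (Fin 5)) P12v 3 + f 5 ({0,1,2} : Finset (Fin 5)) P12v 4 ≤ 3 := by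
    have hs := (hvalid 5 ({0,1,2} : Finset (Fin 5)) P12v (by rfl) nlP12).2
    rw [Fin.sum_univ_five] at hs; push_cast at hs; linarith
  have robP12 : β * 6 ≤ f 5 ({0,1,2} : Finset (Fin 5)) P12v 0 * 2 + f 5 ({0,1,2} : Finset (Fin 5)) P12v 1 * 1 + f 5 ({0,1,2} : Finset (Fin 5)) P12v 2 * 1 + f 5 ({0,1,2} : Finset (Fin 5)) P12v 3 * 2 + f 5 ({0,1,2} : Finset (Fin 5)) P12v 4 * 2 := by
    have hr := hrob 5 ({0,1,2} : Finset (Fin 5)) P12v (by rfl) nlP12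
    rw [(by rw [hP12def]; decide : maxDeg 3 P12v = 6), Fin.sum_univ_five, (by rw [hP12def]; decide : indeg P12v 0 = 2), (by rw [hP12def]; decide : indeg P12v 1 = 1), (by rw [hP12def]; decide : indeg P12v 2 = 1), (by rw [hP12def]; decide : indeg P12v 3 = 2), (by rw [hP12def]; decide : indeg P12v 4 = 2)] at hr
    push_cast at hr; linarith
  have impP12a : f 5 ({0,1,2} : Finset (Fin 5)) P12v 1 = f 5 ({0,1,2} : Finset (Fin 5)) A2v 1 :=
    himp 5 ({0,1,2} : Finset (Fin 5)) P12v A2v 1 (by rfl) nlP12 nlA2 (by rw [hP12def, hA2def]; decide)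
  have impP12b : f 5 ({0,1,2} : Finset (Fin 5)) P12v 2 = f 5 ({0,1,2} : Finset (Fin 5)) A1v 2 :=
    himp 5 ({0,1,2} : Finset (Fin 5)) P12v A1v 2 (by rfl) nlP12 nlA1 (by rw [hP12def, hA1def]; decide)
  have pr12 : f 5 ({0,1,2} : Finset (Fin 5)) A2v 1 + f 5 ({0,1,2} : Finset (Fin 5)) A1v 2 ≤ 6 - 6*β := by
    linarith [robP12, sumP12, impP12a, impP12b]
  have sumP13 : f 5 ({0,1,2} : Finset (Fin 5)) P13v 0 + f 5 ({0,1,2} : Finset (Fin 5)) P13v 1 + f 5 ({0,1,2} : Finset (Fin 5)) P13v 2 + f 5 ({0,1,2} : Finset (Fin 5)) P13v 3 + f 5 ({0,1,2} : Finset (Fin 5)) P13v 4 ≤ 3 := by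
    have hs := (hvalid 5 ({0,1,2} : Finset (Fin 5)) P13v (by rfl) nlP13).2
    rw [Fin.sum_univ_five] at hs; push_cast at hs; linarith
  have robP13 : β * 6 ≤ f 5 ({0,1,2} : Finset (Fin 5)) P13v 0 * 2 + f 5 ({0,1,2} : Finset (Fin 5)) P13v 1 * 1 + f 5 ({0,1,2} : Finset (Fin 5)) P13v 2 * 2 + f 5 ({0,1,2} : Finset (Fin 5)) P13v 3 * 1 + f 5 ({0,1,2} : Finset (Fin 5)) P13v 4 * 2 := by
    have hr := hrob 5 ({0,1,2} : Finset (Fin 5)) P13v (by rfl) nlP13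
    rw [(by rw [hP13def]; decide : maxDeg 3 P13v = 6), Fin.sum_univ_five, (by rw [hP13def]; decide : indeg P13v 0 = 2), (by rw [hP13def]; decide : indeg P13v 1 = 1), (by rw [hP13def]; decide : indeg P13v 2 = 2), (by rw [hP13def]; decide : indeg P13v 3 = 1), (by rw [hP13def]; decide : indeg P13v 4 = 2)] at hr
    push_cast at hr; linarith
  have impP13a : f 5 ({0,1,2} : Finset (Fin 5)) P13v 1 = f 5 ({0,1,2} : Finset (Fin 5)) A3v 1 :=
    himp 5 ({0,1,2} : Finset (Fin 5)) P13v A3v 1 (by rfl) nlP13 nlA3 (by rw [hP13def, hA3def]; decide)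
  have impP13b : f 5 ({0,1,2} : Finset (Fin 5)) P13v 3 = f 5 ({0,1,2} : Finset (Fin 5)) A1v 3 :=
    himp 5 ({0,1,2} : Finset (Fin 5)) P13v A1v 3 (by rfl) nlP13 nlA1 (by rw [hP13def, hA1def]; decide)
  have pr13 : f 5 ({0,1,2} : Finset (Fin 5)) A3v 1 + f 5 ({0,1,2} : Finset (Fin 5)) A1v 3 ≤ 6 - 6*β := by
    linarith [robP13, sumP13, impP13a, impP13b]
  have sumP14 : f 5 ({0,1,2} : Finset (Fin 5)) P14v 0 + f 5 ({0,1,2} : Finset (Fin 5)) P14v 1 + f 5 ({0,1,2} : Finset (Fin 5)) P14v 2 + f 5 ({0,1,2} : Finset (Fin 5)) P14v 3 + f 5 ({0,1,2} : Finset (Fin 5)) P14v 4 ≤ 3 := by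
    have hs := (hvalid 5 ({0,1,2} : Finset (Fin 5)) P14v (by rfl) nlP14).2
    rw [Fin.sum_univ_five] at hs; push_cast at hs; linarith
  have robP14 : β * 6 ≤ f 5 ({0,1,2} : Finset (Fin 5)) P14v 0 * 2 + f 5 ({0,1,2} : Finset (Fin 5)) P14v 1 * 1 + f 5 ({0,1,2} : Finset (Fin 5)) P14v 2 * 2 + f 5 ({0,1,2} : Finset (Fin 5)) P14v 3 * 2 + f 5 ({0,1,2} : Finset (Fin 5)) P14v 4 * 1 := by
    have hr := hrob 5 ({0,1,2} : Finset (Fin 5)) P14v (by rfl) nlP14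
    rw [(by rw [hP14def]; decide : maxDeg 3 P14v = 6), Fin.sum_univ_five, (by rw [hP14def]; decide : indeg P14v 0 = 2), (by rw [hP14def]; decide : indeg P14v 1 = 1), (by rw [hP14def]; decide : indeg P14v 2 = 2), (by rw [hP14def]; decide : indeg P14v 3 = 2), (by rw [hP14def]; decide : indeg P14v 4 = 1)] at hr
    push_cast at hr; linarith
  have impP14a : f 5 ({0,1,2} : Finset (Fin 5)) P14v 1 = f 5 ({0,1,2} : Finset (Fin 5)) A4v 1 :=
    himp 5 ({0,1,2} : Finset (Fin 5)) P14v A4v 1 (by rfl) nlP14 nlA4 (by rw [hP14def, hA4def]; decide)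
  have impP14b : f 5 ({0,1,2} : Finset (Fin 5)) P14v 4 = f 5 ({0,1,2} : Finset (Fin 5)) A1v 4 :=
    himp 5 ({0,1,2} : Finset (Fin 5)) P14v A1v 4 (by rfl) nlP14 nlA1 (by rw [hP14def, hA1def]; decide)
  have pr14 : f 5 ({0,1,2} : Finset (Fin 5)) A4v 1 + f 5 ({0,1,2} : Finset (Fin 5)) A1v 4 ≤ 6 - 6*β := by
    linarith [robP14, sumP14, impP14a, impP14b]
  have sumP23 : f 5 ({0,1,2} : Finset (Fin 5)) P23v 0 + f 5 ({0,1,2} : Finset (Fin 5)) P23v 1 + f 5 ({0,1,2} : Finset (Fin 5)) P23v 2 + f 5 ({0,1,2} : Finset (Fin 5)) P23v 3 + f 5 ({0,1,2} : Finset (Fin 5)) P23v 4 ≤ 3 := by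
    have hs := (hvalid 5 ({0,1,2} : Finset (Fin 5)) P23v (by rfl) nlP23).2
    rw [Fin.sum_univ_five] at hs; push_cast at hs; linarith
  have robP23 : β * 6 ≤ f 5 ({0,1,2} : Finset (Fin 5)) P23v 0 * 2 + f 5 ({0,1,2} : Finset (Fin 5)) P23v 1 * 2 + f 5 ({0,1,2} : Finset (Fin 5)) P23v 2 * 1 + f 5 ({0,1,2} : Finset (Fin 5)) P23v 3 * 1 + f 5 ({0,1,2} : Finset (Fin 5)) P23v 4 * 2 := by
    have hr := hrob 5 ({0,1,2} : Finset (Fin 5)) P23v (by rfl) nlP23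
    rw [(by rw [hP23def]; decide : maxDeg 3 P23v = 6), Fin.sum_univ_five, (by rw [hP23def]; decide : indeg P23v 0 = 2), (by rw [hP23def]; decide : indeg P23v 1 = 2), (by rw [hP23def]; decide : indeg P23v 2 = 1), (by rw [hP23def]; decide : indeg P23v 3 = 1), (by rw [hP23def]; decide : indeg P23v 4 = 2)] at hr
    push_cast at hr; linarith
  have impP23a : f 5 ({0,1,2} : Finset (Fin 5)) P23v 2 = f 5 ({0,1,2} : Finset (Fin 5)) A3v 2 :=
    himp 5 ({0,1,2} : Finset (Fin 5)) P23v A3v 2 (by rfl) nlP23 nlA3 (by rw [hP23def, hA3def]; decide)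
  have impP23b : f 5 ({0,1,2} : Finset (Fin 5)) P23v 3 = f 5 ({0,1,2} : Finset (Fin 5)) A2v 3 :=
    himp 5 ({0,1,2} : Finset (Fin 5)) P23v A2v 3 (by rfl) nlP23 nlA2 (by rw [hP23def, hA2def]; decide)
  have pr23 : f 5 ({0,1,2} : Finset (Fin 5)) A3v 2 + f 5 ({0,1,2} : Finset (Fin 5)) A2v 3 ≤ 6 - 6*β := by
    linarith [robP23, sumP23, impP23a, impP23b]
  have sumP24 : f 5 ({0,1,2} : Finset (Fin 5)) P24v 0 + f 5 ({0,1,2} : Finset (Fin 5)) P24v 1 + f 5 ({0,1,2} : Finset (Fin 5)) P24v 2 + f 5 ({0,1,2} : Finset (Fin 5)) P24v 3 + f 5 ({0,1,2} : Finset (Fin 5)) P24v 4 ≤ 3 := by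
    have hs := (hvalid 5 ({0,1,2} : Finset (Fin 5)) P24v (by rfl) nlP24).2
    rw [Fin.sum_univ_five] at hs; push_cast at hs; linarith
  have robP24 : β * 6 ≤ f 5 ({0,1,2} : Finset (Fin 5)) P24v 0 * 2 + f 5 ({0,1,2} : Finset (Fin 5)) P24v 1 * 2 + f 5 ({0,1,2} : Finset (Fin 5)) P24v 2 * 1 + f 5 ({0,1,2} : Finset (Fin 5)) P24v 3 * 2 + f 5 ({0,1,2} : Finset (Fin 5)) P24v 4 * 1 := by
    have hr := hrob 5 ({0,1,2} : Finset (Fin 5)) P24v (by rfl) nlP24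
    rw [(by rw [hP24def]; decide : maxDeg 3 P24v = 6), Fin.sum_univ_five, (by rw [hP24def]; decide : indeg P24v 0 = 2), (by rw [hP24def]; decide : indeg P24v 1 = 2), (by rw [hP24def]; decide : indeg P24v 2 = 1), (by rw [hP24def]; decide : indeg P24v 3 = 2), (by rw [hP24def]; decide : indeg P24v 4 = 1)] at hr
    push_cast at hr; linarith
  have impP24a : f 5 ({0,1,2} : Finset (Fin 5)) P24v 2 = f 5 ({0,1,2} : Finset (Fin 5)) A4v 2 :=
    himp 5 ({0,1,2} : Finset (Fin 5)) P24v A4v 2 (by rfl) nlP24 nlA4 (by rw [hP24def, hA4def]; decide)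
  have impP24b : f 5 ({0,1,2} : Finset (Fin 5)) P24v 4 = f 5 ({0,1,2} : Finset (Fin 5)) A2v 4 :=
    himp 5 ({0,1,2} : Finset (Fin 5)) P24v A2v 4 (by rfl) nlP24 nlA2 (by rw [hP24def, hA2def]; decide)
  have pr24 : f 5 ({0,1,2} : Finset (Fin 5)) A4v 2 + f 5 ({0,1,2} : Finset (Fin 5)) A2v 4 ≤ 6 - 6*β := by
    linarith [robP24, sumP24, impP24a, impP24b]
  have sumP34 : f 5 ({0,1,2} : Finset (Fin 5)) P34v 0 + f 5 ({0,1,2} : Finset (Fin 5)) P34v 1 + f 5 ({0,1,2} : Finset (Fin 5)) P34v 2 + f 5 ({0,1,2} : Finset (Fin 5)) P34v 3 + f 5 ({0,1,2} : Finset (Fin 5)) P34v 4 ≤ 3 := by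
    have hs := (hvalid 5 ({0,1,2} : Finset (Fin 5)) P34v (by rfl) nlP34).2
    rw [Fin.sum_univ_five] at hs; push_cast at hs; linarith
  have robP34 : β * 6 ≤ f 5 ({0,1,2} : Finset (Fin 5)) P34v 0 * 2 + f 5 ({0,1,2} : Finset (Fin 5)) P34v 1 * 2 + f 5 ({0,1,2} : Finset (Fin 5)) P34v 2 * 2 + f 5 ({0,1,2} : Finset (Fin 5)) P34v 3 * 1 + f 5 ({0,1,2} : Finset (Fin 5)) P34v 4 * 1 := by
    have hr := hrob 5 ({0,1,2} : Finset (Fin 5)) P34v (by rfl) nlP34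
    rw [(by rw [hP34def]; decide : maxDeg 3 P34v = 6), Fin.sum_univ_five, (by rw [hP34def]; decide : indeg P34v 0 = 2), (by rw [hP34def]; decide : indeg P34v 1 = 2), (by rw [hP34def]; decide : indeg P34v 2 = 2), (by rw [hP34def]; decide : indeg P34v 3 = 1), (by rw [hP34def]; decide : indeg P34v 4 = 1)] at hr
    push_cast at hr; linarith
  have impP34a : f 5 ({0,1,2} : Finset (Fin 5)) P34v 3 = f 5 ({0,1,2} : Finset (Fin 5)) A4v 3 :=
    himp 5 ({0,1,2} : Finset (Fin 5)) P34v A4v 3 (by rfl) nlP34 nlA4 (by rw [hP34def, hA4def]; decide)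
  have impP34b : f 5 ({0,1,2} : Finset (Fin 5)) P34v 4 = f 5 ({0,1,2} : Finset (Fin 5)) A3v 4 :=
    himp 5 ({0,1,2} : Finset (Fin 5)) P34v A3v 4 (by rfl) nlP34 nlA3 (by rw [hP34def, hA3def]; decide)
  have pr34 : f 5 ({0,1,2} : Finset (Fin 5)) A4v 3 + f 5 ({0,1,2} : Finset (Fin 5)) A3v 4 ≤ 6 - 6*β := by
    linarith [robP34, sumP34, impP34a, impP34b]
  have consP34 : α * 6 ≤ f 5 ({0,1,2} : Finset (Fin 5)) P34v 0 * 2 + f 5 ({0,1,2} : Finset (Fin 5)) P34v 1 * 2 + f 5 ({0,1,2} : Finset (Fin 5)) P34v 2 * 2 + f 5 ({0,1,2} : Finset (Fin 5)) P34v 3 * 1 + f 5 ({0,1,2} : Finset (Fin 5)) P34v 4 * 1 := by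
    have hr := hcons 5 ({0,1,2} : Finset (Fin 5)) P34v (by rfl) nlP34 (by rw [hP34def]; decide)
    rw [(by rw [hP34def]; decide : maxDeg 3 P34v = 6), Fin.sum_univ_five, (by rw [hP34def]; decide : indeg P34v 0 = 2), (by rw [hP34def]; decide : indeg P34v 1 = 2), (by rw [hP34def]; decide : indeg P34v 2 = 2), (by rw [hP34def]; decide : indeg P34v 3 = 1), (by rw [hP34def]; decide : indeg P34v 4 = 1)] at hr
    push_cast at hr; linarith
  have pa34 : f 5 ({0,1,2} : Finset (Fin 5)) A4v 3 + f 5 ({0,1,2} : Finset (Fin 5)) A3v 4 ≤ 6 - 6*α := by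
    linarith [consP34, sumP34, impP34a, impP34b]
  have sumM03 : f 5 ({0,1,2} : Finset (Fin 5)) M03v 0 + f 5 ({0,1,2} : Finset (Fin 5)) M03v 1 + f 5 ({0,1,2} : Finset (Fin 5)) M03v 2 + f 5 ({0,1,2} : Finset (Fin 5)) M03v 3 + f 5 ({0,1,2} : Finset (Fin 5)) M03v 4 ≤ 3 := by
    have hs := (hvalid 5 ({0,1,2} : Finset (Fin 5)) M03v (by rfl) nlM03).2
    rw [Fin.sum_univ_five] at hs; push_cast at hs; linarith
  have consM03 : α * 5 ≤ f 5 ({0,1,2} : Finset (Fin 5)) M03v 0 * 1 + f 5 ({0,1,2} : Finset (Fin 5)) M03v 1 * 2 + f 5 ({0,1,2} : Finset (Fin 5)) M03v 2 * 2 + f 5 ({0,1,2} : Finset (Fin 5)) M03v 3 * 1 + f 5 ({0,1,2} : Finset (Fin 5)) M03v 4 * 1 := by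
    have hr := hcons 5 ({0,1,2} : Finset (Fin 5)) M03v (by rfl) nlM03 (by rw [hM03def]; decide)
    rw [(by rw [hM03def]; decide : maxDeg 3 M03v = 5), Fin.sum_univ_five, (by rw [hM03def]; decide : indeg M03v 0 = 1), (by rw [hM03def]; decide : indeg M03v 1 = 2), (by rw [hM03def]; decide : indeg M03v 2 = 2), (by rw [hM03def]; decide : indeg M03v 3 = 1), (by rw [hM03def]; decide : indeg M03v 4 = 1)] at hr
    push_cast at hr; linarith
  have impM03a : f 5 ({0,1,2} : Finset (Fin 5)) M03v 0 = f 5 ({0,1,2} : Finset (Fin 5)) B3v 0 :=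
    himp 5 ({0,1,2} : Finset (Fin 5)) M03v B3v 0 (by rfl) nlM03 nlB3 (by rw [hM03def, hB3def]; decide)
  have impM03b : f 5 ({0,1,2} : Finset (Fin 5)) M03v 3 = f 5 ({0,1,2} : Finset (Fin 5)) A0v 3 :=
    himp 5 ({0,1,2} : Finset (Fin 5)) M03v A0v 3 (by rfl) nlM03 nlA0 (by rw [hM03def, hA0def]; decide)
  have hxM03 : 0 ≤ f 5 ({0,1,2} : Finset (Fin 5)) M03v 4 := ((hvalid 5 ({0,1,2} : Finset (Fin 5)) M03v (by rfl) nlM03).1 4).1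
  have pm03 : f 5 ({0,1,2} : Finset (Fin 5)) B3v 0 + f 5 ({0,1,2} : Finset (Fin 5)) A0v 3 ≤ 6 - 5*α := by
    linarith [consM03, sumM03, impM03a, impM03b, hxM03]
  have sumM04 : f 5 ({0,1,2} : Finset (Fin 5)) M04v 0 + f 5 ({0,1,2} : Finset (Fin 5)) M04v 1 + f 5 ({0,1,2} : Finset (Fin 5)) M04v 2 + f 5 ({0,1,2} : Finset (Fin 5)) M04v 3 + f 5 ({0,1,2} : Finset (Fin 5)) M04v 4 ≤ 3 := by
    have hs := (hvalid 5 ({0,1,2} : Finset (Fin 5)) M04v (by rfl) nlM04).2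
    rw [Fin.sum_univ_five] at hs; push_cast at hs; linarith
  have consM04 : α * 5 ≤ f 5 ({0,1,2} : Finset (Fin 5)) M04v 0 * 1 + f 5 ({0,1,2} : Finset (Fin 5)) M04v 1 * 2 + f 5 ({0,1,2} : Finset (Fin 5)) M04v 2 * 2 + f 5 ({0,1,2} : Finset (Fin 5)) M04v 3 * 1 + f 5 ({0,1,2} : Finset (Fin 5)) M04v 4 * 1 := by
    have hr := hcons 5 ({0,1,2} : Finset (Fin 5)) M04v (by rfl) nlM04 (by rw [hM04def]; decide)
    rw [(by rw [hM04def]; decide : maxDeg 3 M04v = 5), Fin.sum_univ_five, (by rw [hM04def]; decide : indeg M04v 0 = 1), (by rw [hM04def]; decide : indeg M04v 1 = 2), (by rw [hM04def]; decide : indeg M04v 2 = 2), (by rw [hM04def]; decide : indeg M04v 3 = 1), (by rw [hM04def]; decide : indeg M04v 4 = 1)] at hr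
    push_cast at hr; linarith
  have impM04a : f 5 ({0,1,2} : Finset (Fin 5)) M04v 0 = f 5 ({0,1,2} : Finset (Fin 5)) B4v 0 :=
    himp 5 ({0,1,2} : Finset (Fin 5)) M04v B4v 0 (by rfl) nlM04 nlB4 (by rw [hM04def, hB4def]; decide)
  have impM04b : f 5 ({0,1,2} : Finset (Fin 5)) M04v 4 = f 5 ({0,1,2} : Finset (Fin 5)) A0v 4 :=
    himp 5 ({0,1,2} : Finset (Fin 5)) M04v A0v 4 (by rfl) nlM04 nlA0 (by rw [hM04def, hA0def]; decide)
  have hxM04 : 0 ≤ f 5 ({0,1,2} : Finset (Fin 5)) M04v 3 := ((hvalid 5 ({0,1,2} : Finset (Fin 5)) M04v (by rfl) nlM04).1 3).1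
  have pm04 : f 5 ({0,1,2} : Finset (Fin 5)) B4v 0 + f 5 ({0,1,2} : Finset (Fin 5)) A0v 4 ≤ 6 - 5*α := by
    linarith [consM04, sumM04, impM04a, impM04b, hxM04]
  have sumM13 : f 5 ({0,1,2} : Finset (Fin 5)) M13v 0 + f 5 ({0,1,2} : Finset (Fin 5)) M13v 1 + f 5 ({0,1,2} : Finset (Fin 5)) M13v 2 + f 5 ({0,1,2} : Finset (Fin 5)) M13v 3 + f 5 ({0,1,2} : Finset (Fin 5)) M13v 4 ≤ 3 := by
    have hs := (hvalid 5 ({0,1,2} : Finset (Fin 5)) M13v (by rfl) nlM13).2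
    rw [Fin.sum_univ_five] at hs; push_cast at hs; linarith
  have consM13 : α * 5 ≤ f 5 ({0,1,2} : Finset (Fin 5)) M13v 0 * 2 + f 5 ({0,1,2} : Finset (Fin 5)) M13v 1 * 1 + f 5 ({0,1,2} : Finset (Fin 5)) M13v 2 * 2 + f 5 ({0,1,2} : Finset (Fin 5)) M13v 3 * 1 + f 5 ({0,1,2} : Finset (Fin 5)) M13v 4 * 1 := by
    have hr := hcons 5 ({0,1,2} : Finset (Fin 5)) M13v (by rfl) nlM13 (by rw [hM13def]; decide)
    rw [(by rw [hM13def]; decide : maxDeg 3 M13v = 5), Fin.sum_univ_five, (by rw [hM13def]; decide : indeg M13v 0 = 2), (by rw [hM13def]; decide : indeg M13v 1 = 1), (by rw [hM13def]; decide : indeg M13v 2 = 2), (by rw [hM13def]; decide : indeg M13v 3 = 1), (by rw [hM13def]; decide : indeg M13v 4 = 1)] at hr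
    push_cast at hr; linarith
  have impM13a : f 5 ({0,1,2} : Finset (Fin 5)) M13v 1 = f 5 ({0,1,2} : Finset (Fin 5)) B3v 1 :=
    himp 5 ({0,1,2} : Finset (Fin 5)) M13v B3v 1 (by rfl) nlM13 nlB3 (by rw [hM13def, hB3def]; decide)
  have impM13b : f 5 ({0,1,2} : Finset (Fin 5)) M13v 3 = f 5 ({0,1,2} : Finset (Fin 5)) A1v 3 :=
    himp 5 ({0,1,2} : Finset (Fin 5)) M13v A1v 3 (by rfl) nlM13 nlA1 (by rw [hM13def, hA1def]; decide)
  have hxM13 : 0 ≤ f 5 ({0,1,2} : Finset (Fin 5)) M13v 4 := ((hvalid 5 ({0,1,2} : Finset (Fin 5)) M13v (by rfl) nlM13).1 4).1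
  have pm13 : f 5 ({0,1,2} : Finset (Fin 5)) B3v 1 + f 5 ({0,1,2} : Finset (Fin 5)) A1v 3 ≤ 6 - 5*α := by
    linarith [consM13, sumM13, impM13a, impM13b, hxM13]
  have sumM14 : f 5 ({0,1,2} : Finset (Fin 5)) M14v 0 + f 5 ({0,1,2} : Finset (Fin 5)) M14v 1 + f 5 ({0,1,2} : Finset (Fin 5)) M14v 2 + f 5 ({0,1,2} : Finset (Fin 5)) M14v 3 + f 5 ({0,1,2} : Finset (Fin 5)) M14v 4 ≤ 3 := by
    have hs := (hvalid 5 ({0,1,2} : Finset (Fin 5)) M14v (by rfl) nlM14).2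
    rw [Fin.sum_univ_five] at hs; push_cast at hs; linarith
  have consM14 : α * 5 ≤ f 5 ({0,1,2} : Finset (Fin 5)) M14v 0 * 2 + f 5 ({0,1,2} : Finset (Fin 5)) M14v 1 * 1 + f 5 ({0,1,2} : Finset (Fin 5)) M14v 2 * 2 + f 5 ({0,1,2} : Finset (Fin 5)) M14v 3 * 1 + f 5 ({0,1,2} : Finset (Fin 5)) M14v 4 * 1 := by
    have hr := hcons 5 ({0,1,2} : Finset (Fin 5)) M14v (by rfl) nlM14 (by rw [hM14def]; decide)
    rw [(by rw [hM14def]; decide : maxDeg 3 M14v = 5), Fin.sum_univ_five, (by rw [hM14def]; decide : indeg M14v 0 = 2), (by rw [hM14def]; decide : indeg M14v 1 = 1), (by rw [hM14def]; decide : indeg M14v 2 = 2), (by rw [hM14def]; decide : indeg M14v 3 = 1), (by rw [hM14def]; decide : indeg M14v 4 = 1)] at hr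
    push_cast at hr; linarith
  have impM14a : f 5 ({0,1,2} : Finset (Fin 5)) M14v 1 = f 5 ({0,1,2} : Finset (Fin 5)) B4v 1 :=
    himp 5 ({0,1,2} : Finset (Fin 5)) M14v B4v 1 (by rfl) nlM14 nlB4 (by rw [hM14def, hB4def]; decide)
  have impM14b : f 5 ({0,1,2} : Finset (Fin 5)) M14v 4 = f 5 ({0,1,2} : Finset (Fin 5)) A1v 4 :=
    himp 5 ({0,1,2} : Finset (Fin 5)) M14v A1v 4 (by rfl) nlM14 nlA1 (by rw [hM14def, hA1def]; decide)
  have hxM14 : 0 ≤ f 5 ({0,1,2} : Finset (Fin 5)) M14v 3 := ((hvalid 5 ({0,1,2} : Finset (Fin 5)) M14v (by rfl) nlM14).1 3).1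
  have pm14 : f 5 ({0,1,2} : Finset (Fin 5)) B4v 1 + f 5 ({0,1,2} : Finset (Fin 5)) A1v 4 ≤ 6 - 5*α := by
    linarith [consM14, sumM14, impM14a, impM14b, hxM14]
  have sumM23 : f 5 ({0,1,2} : Finset (Fin 5)) M23v 0 + f 5 ({0,1,2} : Finset (Fin 5)) M23v 1 + f 5 ({0,1,2} : Finset (Fin 5)) M23v 2 + f 5 ({0,1,2} : Finset (Fin 5)) M23v 3 + f 5 ({0,1,2} : Finset (Fin 5)) M23v 4 ≤ 3 := by
    have hs := (hvalid 5 ({0,1,2} : Finset (Fin 5)) M23v (by rfl) nlM23).2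
    rw [Fin.sum_univ_five] at hs; push_cast at hs; linarith
  have consM23 : α * 5 ≤ f 5 ({0,1,2} : Finset (Fin 5)) M23v 0 * 2 + f 5 ({0,1,2} : Finset (Fin 5)) M23v 1 * 2 + f 5 ({0,1,2} : Finset (Fin 5)) M23v 2 * 1 + f 5 ({0,1,2} : Finset (Fin 5)) M23v 3 * 1 + f 5 ({0,1,2} : Finset (Fin 5)) M23v 4 * 1 := by
    have hr := hcons 5 ({0,1,2} : Finset (Fin 5)) M23v (by rfl) nlM23 (by rw [hM23def]; decide)
    rw [(by rw [hM23def]; decide : maxDeg 3 M23v = 5), Fin.sum_univ_five, (by rw [hM23def]; decide : indeg M23v 0 = 2), (by rw [hM23def]; decide : indeg M23v 1 = 2), (by rw [hM23def]; decide : indeg M23v 2 = 1), (by rw [hM23def]; decide : indeg M23v 3 = 1), (by rw [hM23def]; decide : indeg M23v 4 = 1)] at hr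
    push_cast at hr; linarith
  have impM23a : f 5 ({0,1,2} : Finset (Fin 5)) M23v 2 = f 5 ({0,1,2} : Finset (Fin 5)) B3v 2 :=
    himp 5 ({0,1,2} : Finset (Fin 5)) M23v B3v 2 (by rfl) nlM23 nlB3 (by rw [hM23def, hB3def]; decide)
  have impM23b : f 5 ({0,1,2} : Finset (Fin 5)) M23v 3 = f 5 ({0,1,2} : Finset (Fin 5)) A2v 3 :=
    himp 5 ({0,1,2} : Finset (Fin 5)) M23v A2v 3 (by rfl) nlM23 nlA2 (by rw [hM23def, hA2def]; decide)
  have hxM23 : 0 ≤ f 5 ({0,1,2} : Finset (Fin 5)) M23v 4 := ((hvalid 5 ({0,1,2} : Finset (Fin 5)) M23v (by rfl) nlM23).1 4).1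
  have pm23 : f 5 ({0,1,2} : Finset (Fin 5)) B3v 2 + f 5 ({0,1,2} : Finset (Fin 5)) A2v 3 ≤ 6 - 5*α := by
    linarith [consM23, sumM23, impM23a, impM23b, hxM23]
  have sumM24 : f 5 ({0,1,2} : Finset (Fin 5)) M24v 0 + f 5 ({0,1,2} : Finset (Fin 5)) M24v 1 + f 5 ({0,1,2} : Finset (Fin 5)) M24v 2 + f 5 ({0,1,2} : Finset (Fin 5)) M24v 3 + f 5 ({0,1,2} : Finset (Fin 5)) M24v 4 ≤ 3 := by
    have hs := (hvalid 5 ({0,1,2} : Finset (Fin 5)) M24v (by rfl) nlM24).2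
    rw [Fin.sum_univ_five] at hs; push_cast at hs; linarith
  have consM24 : α * 5 ≤ f 5 ({0,1,2} : Finset (Fin 5)) M24v 0 * 2 + f 5 ({0,1,2} : Finset (Fin 5)) M24v 1 * 2 + f 5 ({0,1,2} : Finset (Fin 5)) M24v 2 * 1 + f 5 ({0,1,2} : Finset (Fin 5)) M24v 3 * 1 + f 5 ({0,1,2} : Finset (Fin 5)) M24v 4 * 1 := by
    have hr := hcons 5 ({0,1,2} : Finset (Fin 5)) M24v (by rfl) nlM24 (by rw [hM24def]; decide)
    rw [(by rw [hM24def]; decide : maxDeg 3 M24v = 5), Fin.sum_univ_five, (by rw [hM24def]; decide : indeg M24v 0 = 2), (by rw [hM24def]; decide : indeg M24v 1 = 2), (by rw [hM24def]; decide : indeg M24v 2 = 1), (by rw [hM24def]; decide : indeg M24v 3 = 1), (by rw [hM24def]; decide : indeg M24v 4 = 1)] at hr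
    push_cast at hr; linarith
  have impM24a : f 5 ({0,1,2} : Finset (Fin 5)) M24v 2 = f 5 ({0,1,2} : Finset (Fin 5)) B4v 2 :=
    himp 5 ({0,1,2} : Finset (Fin 5)) M24v B4v 2 (by rfl) nlM24 nlB4 (by rw [hM24def, hB4def]; decide)
  have impM24b : f 5 ({0,1,2} : Finset (Fin 5)) M24v 4 = f 5 ({0,1,2} : Finset (Fin 5)) A2v 4 :=
    himp 5 ({0,1,2} : Finset (Fin 5)) M24v A2v 4 (by rfl) nlM24 nlA2 (by rw [hM24def, hA2def]; decide)
  have hxM24 : 0 ≤ f 5 ({0,1,2} : Finset (Fin 5)) M24v 3 := ((hvalid 5 ({0,1,2} : Finset (Fin 5)) M24v (by rfl) nlM24).1 3).1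
  have pm24 : f 5 ({0,1,2} : Finset (Fin 5)) B4v 2 + f 5 ({0,1,2} : Finset (Fin 5)) A2v 4 ≤ 6 - 5*α := by
    linarith [consM24, sumM24, impM24a, impM24b, hxM24]
  refine ⟨?_, ?_, ?_⟩
  · linarith [robA0, robA1, robA2, robA3, robA4, pr01, pr02, pr03, pr04, pr12, pr13, pr14, pr23, pr24, pr34]
  · linarith [robA0, robA1, robA2, consB3, consB4, pr01, pr02, pr12, pm03, pm04, pm13, pm14, pm23, pm24]
  · linarith [robA0, robA1, robA2, consA3, consA4, pr01, pr02, pr03, pr04, pr12, pr13, pr14, pr23, pr24, pa34]
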